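/- Let C_n(t) be the Narayana polynomials, C_0(t) = 1 and C_n(t) = Σ_{k=0}^{n-1} (1/(k+1))·binom(n,k)·binom(n-1,k)·t^k for n > 0, and let c_0(x,t) = Σ_{n≥0} C_n(t)·x^n and c_1(x,t) = 1 + t·Σ_{n≥1} C_n(t)·x^n, formal power series in x over the polynomial ring ℚ[t]. Then c_1(x,t) = 1 + x·t·c_0(x,t)·c_1(x,t) and c_0(x,t) = 1 + x·c_0(x,t)·c_1(x,t). -/

import Mathlib

/-- The Narayana polynomials: `C₀(t) = 1` and
`Cₙ(t) = Σ_{k=0}^{n-1} (1/(k+1))·binom(n,k)·binom(n-1,k)·t^k` for `n > 0`. -/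
noncomputable def narayana (n : ℕ) : Polynomial ℚ :=
  if n = 0 then 1
  else ∑ k ∈ Finset.range n,
    Polynomial.C ((1 / (k + 1 : ℚ)) * (n.choose k) * ((n - 1).choose k)) * Polynomial.X ^ k

/-- The generating function `c₀(x,t) = Σ_{n≥0} Cₙ(t)·xⁿ` of the Narayana polynomials,
a formal power series in `x` over `ℚ[t]`. -/
noncomputable def narGF0 : PowerSeries (Polynomial ℚ) := PowerSeries.mk narayana

/-- The generating function `c₁(x,t) = 1 + t·Σ_{n≥1} Cₙ(t)·xⁿ`,
a formal power series in `x` over `ℚ[t]`. -/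
noncomputable def narGF1 : PowerSeries (Polynomial ℚ) :=
  PowerSeries.mk fun n => if n = 0 then 1 else Polynomial.X * narayana n

namespace NarayanaProofAux

open scoped Nat
set_option maxHeartbeats 2000000

/-- The `k`-th coefficient of the `p`-th Narayana polynomial, as a rational number.
This formula is valid for all `p` and `k` (including `p = 0` and out-of-range `k`). -/
noncomputable def bq (p k : ℕ) : ℚ := (1 / (k + 1 : ℚ)) * (p.choose k) * ((p - 1).choose k)

lemma coeff_narayana (p k : ℕ) : (narayana p).coeff k = bq p k := by
  rcases p with _ | q
  · rcases k with _ | k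
    · simp [narayana, bq]
    · simp [narayana, bq, Polynomial.coeff_one, Nat.choose_eq_zero_of_lt (Nat.succ_pos k)]
  · rw [narayana, if_neg (Nat.succ_ne_zero q), Polynomial.finset_sum_coeff]
    simp only [Polynomial.coeff_C_mul, Polynomial.coeff_X_pow, mul_ite, mul_one, mul_zero]
    rw [Finset.sum_ite_eq (Finset.range (q + 1)) k]
    by_cases h : k ∈ Finset.range (q + 1)
    · rw [if_pos h]; rfl
    · rw [if_neg h]
      have hk : q < k := by simpa [Nat.lt_succ_iff, not_lt] using h
      simp [bq, Nat.choose_eq_zero_of_lt hk]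

lemma choose_cast (n k : ℕ) : ((n.choose k : ℚ)) = n.descFactorial k / (k ! : ℚ) := by
  rw [eq_div_iff (by exact_mod_cast k.factorial_ne_zero), mul_comm]
  exact_mod_cast (Nat.descFactorial_eq_factorial_mul_choose n k).symm

lemma desc_cast_succ (n k : ℕ) :
    ((n.descFactorial (k + 1) : ℚ)) = ((n : ℚ) - k) * n.descFactorial k := by
  rcases le_or_gt k n with h | h
  · rw [Nat.descFactorial_succ]
    push_cast [Nat.cast_sub h]
    ring
  · rw [Nat.descFactorial_of_lt h, Nat.descFactorial_of_lt (by omega)]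
    simp

/-- The key binomial identity: the generic-coefficient case of the three-term
recurrence for the Narayana polynomials. -/
lemma key2 (M J : ℕ) :
    ((M : ℚ) + 4) * bq (M + 3) (J + 2)
      = (2 * (M : ℚ) + 5) * (bq (M + 2) (J + 2) + bq (M + 2) (J + 1))
        - ((M : ℚ) + 1) * (bq (M + 1) (J + 2) - 2 * bq (M + 1) (J + 1) + bq (M + 1) J) := by
  have hsub3 : M + 3 - 1 = M + 2 := rfl
  have hsub2 : M + 2 - 1 = M + 1 := rfl
  have hsub1 : M + 1 - 1 = M := rfl
  have d2 : ((M+2).descFactorial (J+1)) = (M+2)*((M+1).descFactorial J) :=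
    Nat.succ_descFactorial_succ (M+1) J
  have d4n : ((M+1).descFactorial (J+1)) = (M+1)*(M.descFactorial J) :=
    Nat.succ_descFactorial_succ M J
  have d6 : ((M.descFactorial (J+1) : ℚ)) = ((M:ℚ) - (J:ℚ)) * (M.descFactorial J : ℚ) :=
    desc_cast_succ M J
  have q1 : (((M+3).descFactorial (J+2) : ℕ) : ℚ)
      = ((M:ℚ)+3)*((M:ℚ)+2)*((M+1).descFactorial J : ℚ) := by
    rw [Nat.succ_descFactorial_succ (M+2) (J+1), d2]; push_cast; ring
  have q3 : (((M+2).descFactorial (J+2) : ℕ) : ℚ)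
      = ((M:ℚ)+2)*((M:ℚ)+1)*(M.descFactorial J : ℚ) := by
    rw [Nat.succ_descFactorial_succ (M+1) (J+1), d4n]; push_cast; ring
  have q4 : (((M+1).descFactorial (J+1) : ℕ) : ℚ) = ((M:ℚ)+1)*(M.descFactorial J : ℚ) := by
    rw [d4n]; push_cast; ring
  have q5 : (((M+1).descFactorial (J+2) : ℕ) : ℚ)
      = ((M:ℚ)+1)*((M:ℚ) - (J:ℚ))*(M.descFactorial J : ℚ) := by
    rw [Nat.succ_descFactorial_succ M (J+1)]; push_cast [d6]; ring
  have q5' : (((M+2).descFactorial (J+1) : ℕ) : ℚ) = ((M:ℚ)+2)*((M+1).descFactorial J : ℚ) := by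
    rw [d2]; push_cast; ring
  have q7 : ((M.descFactorial (J+2) : ℕ) : ℚ)
      = ((M:ℚ) - (J:ℚ) - 1)*((M:ℚ) - (J:ℚ))*(M.descFactorial J : ℚ) := by
    rw [desc_cast_succ M (J+1), d6]; push_cast; ring
  have hrel : ((M:ℚ) + 1 - (J:ℚ)) * ((M+1).descFactorial J : ℚ)
      = ((M:ℚ) + 1) * (M.descFactorial J : ℚ) := by
    have h := desc_cast_succ (M+1) J
    rw [q4] at h
    push_cast at h
    linarith
  have hf1 : (((J+1)! : ℕ) : ℚ) = ((J:ℚ)+1)*(J ! : ℚ) := by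
    rw [Nat.factorial_succ]; push_cast; ring
  have hf2 : (((J+2)! : ℕ) : ℚ) = ((J:ℚ)+2)*(((J:ℚ)+1)*(J ! : ℚ)) := by
    rw [Nat.factorial_succ, Nat.factorial_succ]; push_cast; ring
  have hfac : (J ! : ℚ) ≠ 0 := by exact_mod_cast J.factorial_ne_zero
  have hJ1 : (J:ℚ) + 1 ≠ 0 := by positivity
  have hJ2 : (J:ℚ) + 2 ≠ 0 := by positivity
  have hJ3 : (J:ℚ) + 3 ≠ 0 := by positivity
  simp only [bq, hsub3, hsub2, hsub1, choose_cast, q1, q3, q4, q5, q5', q7, d6, hf1, hf2,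
    Nat.cast_add, Nat.cast_ofNat, Nat.cast_one]
  rcases le_or_gt J M with hJM | hMJ
  · have hJMq : (J:ℚ) ≤ (M:ℚ) := by exact_mod_cast hJM
    have hne : (M:ℚ) + 1 - (J:ℚ) ≠ 0 := by intro h; linarith
    have hU : ((M+1).descFactorial J : ℚ)
        = ((M:ℚ) + 1) * (M.descFactorial J : ℚ) / ((M:ℚ) + 1 - (J:ℚ)) := by
      rw [eq_div_iff hne]; linarith [hrel]
    rw [hU]
    field_simp
    ring
  · have hV : (M.descFactorial J : ℚ) = 0 := by
      exact_mod_cast Nat.descFactorial_of_lt hMJ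
    rw [hV]
    ring

lemma key0 (k : ℕ) : ((k:ℚ) + 3) * bq (k+2) 0 = (2*(k:ℚ)+3) * bq (k+1) 0 - (k:ℚ) * bq k 0 := by
  simp [bq]; ring

lemma key1 (M : ℕ) :
    ((M:ℚ) + 4) * bq (M+3) 1
      = (2*(M:ℚ)+5) * (bq (M+2) 1 + bq (M+2) 0) - ((M:ℚ)+1) * (bq (M+1) 1 - 2 * bq (M+1) 0) := by
  have h3 : M + 3 - 1 = M + 2 := rfl
  have h2 : M + 2 - 1 = M + 1 := rfl
  have h1 : M + 1 - 1 = M := rfl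
  simp only [bq, h3, h2, h1, Nat.choose_one_right, Nat.choose_zero_right]
  push_cast
  ring

/-- The three-term linear recurrence for the Narayana polynomials:
`(n+1)·Cₙ = (2n-1)(1+t)·Cₙ₋₁ - (n-2)(1-t)²·Cₙ₋₂` (with `n = k+2`). -/
lemma nar_rec (k : ℕ) :
    narayana (k+2) * ((k : Polynomial ℚ) + 3)
      = (2*(k : Polynomial ℚ) + 3) * (narayana (k+1) + Polynomial.X * narayana (k+1))
        - (k : Polynomial ℚ) *
            (narayana k - 2*(Polynomial.X * narayana k)
              + Polynomial.X * (Polynomial.X * narayana k)) := by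
  rw [show ((k : Polynomial ℚ) + 3) = Polynomial.C ((k:ℚ)+3) by simp [map_ofNat],
    show (2*(k : Polynomial ℚ) + 3) = Polynomial.C (2*(k:ℚ)+3) by simp [map_ofNat],
    show ((k : Polynomial ℚ)) = Polynomial.C ((k:ℚ)) by simp,
    show ((2 : Polynomial ℚ)) = Polynomial.C ((2:ℚ)) by simp [map_ofNat]]
  have hX0 : ∀ p : Polynomial ℚ, (Polynomial.X * p).coeff 0 = 0 := fun p => by simp
  apply Polynomial.ext
  intro j
  rcases j with _ | j
  · simp only [Polynomial.coeff_mul_C, Polynomial.coeff_C_mul, Polynomial.coeff_add,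
      Polynomial.coeff_sub, hX0, coeff_narayana, mul_zero, add_zero, sub_zero]
    linear_combination key0 k
  · rcases j with _ | J
    · simp only [Polynomial.coeff_mul_C, Polynomial.coeff_C_mul, Polynomial.coeff_add,
        Polynomial.coeff_sub, Polynomial.coeff_X_mul, hX0, coeff_narayana,
        mul_zero, add_zero, sub_zero]
      rcases k with _ | M
      · norm_num [bq]
      · push_cast
        linear_combination key1 M
    · simp only [Polynomial.coeff_mul_C, Polynomial.coeff_C_mul, Polynomial.coeff_add,
        Polynomial.coeff_sub, Polynomial.coeff_X_mul, coeff_narayana]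
      rcases k with _ | M
      · have c1 : (1:ℕ).choose (J+2) = 0 := Nat.choose_eq_zero_of_lt (by omega)
        have c0 : (0:ℕ).choose (J+2) = 0 := Nat.choose_eq_zero_of_lt (by omega)
        have c0' : (0:ℕ).choose (J+1) = 0 := Nat.choose_eq_zero_of_lt (by omega)
        norm_num [bq, c1, c0, c0']
      · push_cast
        linear_combination key2 M J

lemma nar0 : narayana 0 = 1 := by simp [narayana]

lemma nar1 : narayana 1 = 1 := by
  have h := coeff_narayana 1
  apply Polynomial.ext
  intro k
  rw [h k]
  rcases k with _ | k
  · simp [bq]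
  · simp [bq, Polynomial.coeff_one, Nat.choose_eq_zero_of_lt (Nat.succ_pos k)]

open PowerSeries (coeff)

local notation "R" => Polynomial ℚ
local notation "pX" => (PowerSeries.X : PowerSeries (Polynomial ℚ))
local notation "Cp" => @PowerSeries.C (Polynomial ℚ) _
local notation "Dx" => PowerSeries.derivative (Polynomial ℚ)
local notation "t" => (Polynomial.X : Polynomial ℚ)
local notation "tt" => (@PowerSeries.C (Polynomial ℚ) _ Polynomial.X)

lemma coeff_X_mul_deriv (g : PowerSeries R) (n : ℕ) :
    @coeff R _ n (pX * Dx g) = @coeff R _ n g * (n : R) := by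
  rcases n with _ | n
  · simp
  · rw [PowerSeries.coeff_succ_X_mul, PowerSeries.coeff_derivative]
    push_cast
    ring

lemma c1X (ps : PowerSeries R) : @coeff R _ 1 (pX * ps) = @coeff R _ 0 ps :=
  PowerSeries.coeff_succ_X_mul 0 ps

/-- The ODE satisfied by the generating function `f = narGF0`:
`x·Δ·f' = ((1+t)x - 1)·f + (1-t)x + 1` where `Δ = (1-t)²x² - 2(1+t)x + 1`. -/
lemma hODE :
    pX * Dx narGF0 - Cp (2 + 2*t) * (pX * (pX * Dx narGF0))
        + Cp ((1 - t)^2) * (pX * (pX * (pX * Dx narGF0)))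
      = Cp (1 + t) * (pX * narGF0) - narGF0 + Cp (1 - t) * pX + 1 := by
  apply PowerSeries.ext
  intro n
  rcases n with _ | n
  · simp only [LinearMap.map_add, LinearMap.map_sub, PowerSeries.coeff_C_mul,
      coeff_X_mul_deriv, PowerSeries.coeff_zero_X_mul, narGF0, PowerSeries.coeff_mk,
      PowerSeries.coeff_X, PowerSeries.coeff_one]
    norm_num [nar0]
  · rcases n with _ | k
    · simp only [LinearMap.map_add, LinearMap.map_sub, PowerSeries.coeff_C_mul,
        coeff_X_mul_deriv, PowerSeries.coeff_succ_X_mul, PowerSeries.coeff_derivative,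
        PowerSeries.coeff_zero_X_mul, narGF0, PowerSeries.coeff_mk,
        PowerSeries.coeff_one_X, PowerSeries.coeff_X, PowerSeries.coeff_one]
      norm_num [nar0, nar1]
    · simp only [LinearMap.map_add, LinearMap.map_sub, PowerSeries.coeff_C_mul,
        PowerSeries.coeff_succ_X_mul, PowerSeries.coeff_derivative, coeff_X_mul_deriv,
        narGF0, PowerSeries.coeff_mk, PowerSeries.coeff_X, PowerSeries.coeff_one]
      rw [if_neg (by omega : ¬ (k+1+1 = 1)), if_neg (by omega : ¬ (k+1+1 = 0))]
      push_cast
      linear_combination nar_rec k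

/-- The series `y = x·t·f² + (x - x·t - 1)·f + 1`, which we show vanishes. -/
noncomputable def yy : PowerSeries R :=
  pX * tt * narGF0^2 + (pX - pX * tt - 1) * narGF0 + 1

lemma hODE' :
    pX * Dx narGF0 - (2 + 2*tt) * (pX * (pX * Dx narGF0))
        + (1 - tt)^2 * (pX * (pX * (pX * Dx narGF0)))
      = (1 + tt) * (pX * narGF0) - narGF0 + (1 - tt) * pX + 1 := by
  have h := hODE
  simp only [map_add, map_mul, map_sub, map_pow, map_one, map_ofNat] at h
  linear_combination h

lemma hdy :
    Dx yy = tt * narGF0^2 + (1 - tt) * narGF0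
      + (2*pX*tt*narGF0 + (pX - pX*tt - 1)) * Dx narGF0 := by
  simp only [yy, sq, map_add, map_sub, Derivation.leibniz, Derivation.map_one_eq_zero,
    PowerSeries.derivative_X, PowerSeries.derivative_C, smul_eq_mul]
  ring

/-- The series `y` satisfies the homogeneous first-order ODE `x·Δ·y' = (c²+2c)·y`. -/
lemma hy :
    pX * Dx yy - (2 + 2*tt) * (pX * (pX * Dx yy))
        + (1 - tt)^2 * (pX * (pX * (pX * Dx yy)))
      = (1 - tt)^2 * (pX * (pX * yy)) - yy := by
  rw [hdy]
  simp only [yy]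
  linear_combination (2*pX*tt*narGF0 + (pX - pX*tt - 1)) * hODE'

lemma hyC :
    pX * Dx yy - Cp (2 + 2*t) * (pX * (pX * Dx yy))
        + Cp ((1 - t)^2) * (pX * (pX * (pX * Dx yy)))
      = Cp ((1 - t)^2) * (pX * (pX * yy)) - yy := by
  have h := hy
  simp only [map_add, map_mul, map_sub, map_pow, map_one, map_ofNat]
  linear_combination h

lemma ycoeff : ∀ n, @coeff R _ n yy = 0 := by
  intro n
  induction n using Nat.strong_induction_on with
  | _ n ih =>
    have h := congrArg (@coeff R _ n) hyC
    rcases n with _ | n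
    · simp only [LinearMap.map_add, LinearMap.map_sub, PowerSeries.coeff_C_mul,
        coeff_X_mul_deriv, PowerSeries.coeff_zero_X_mul] at h
      linear_combination h
    · rcases n with _ | k
      · simp only [LinearMap.map_add, LinearMap.map_sub, PowerSeries.coeff_C_mul,
          coeff_X_mul_deriv, PowerSeries.coeff_succ_X_mul, PowerSeries.coeff_derivative,
          PowerSeries.coeff_zero_X_mul] at h
        have h2 : (2 : R) * (@coeff R _ 1 yy) = 0 := by
          push_cast at h
          linear_combination h
        exact (mul_eq_zero.mp h2).resolve_left two_ne_zero
      · simp only [LinearMap.map_add, LinearMap.map_sub, PowerSeries.coeff_C_mul,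
          coeff_X_mul_deriv, PowerSeries.coeff_succ_X_mul,
          PowerSeries.coeff_derivative] at h
        rw [ih (k+1) (by omega), ih k (by omega)] at h
        have h3 : (((k:R)) + 3) * @coeff R _ (k+2) yy = 0 := by
          push_cast at h
          linear_combination h
        have hne : (((k:R)) + 3) ≠ 0 := by
          have h4 : (((k+3 : ℕ)) : R) = ((k:R)) + 3 := by push_cast; ring
          rw [← h4]
          exact Nat.cast_ne_zero.mpr (by omega)
        exact (mul_eq_zero.mp h3).resolve_left hne

/-- The quadratic functional equation for the Narayana generating function. -/
lemma ynull : pX * tt * narGF0^2 + (pX - pX * tt - 1) * narGF0 + 1 = 0 := by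
  have h : yy = 0 := PowerSeries.ext fun n => by rw [ycoeff n, map_zero]
  exact h

lemma hh : narGF1 = 1 + tt * (narGF0 - 1) := by
  apply PowerSeries.ext
  intro n
  rcases n with _ | n
  · simp [narGF1, narGF0, nar0]
  · simp [narGF1, narGF0]

lemma main :
    narGF1 = 1 + pX * tt * narGF0 * narGF1 ∧ narGF0 = 1 + pX * narGF0 * narGF1 := by
  have hy0 := ynull
  constructor
  · rw [hh]
    linear_combination (-tt) * hy0
  · rw [hh]
    linear_combination -hy0

end NarayanaProofAux

/-- The functional equations `c₁ = 1 + x·t·c₀·c₁` and `c₀ = 1 + x·c₀·c₁`. -/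
theorem stmt11 :
    narGF1 = 1 + PowerSeries.X * PowerSeries.C (R := Polynomial ℚ) Polynomial.X * narGF0 * narGF1 ∧
      narGF0 = 1 + PowerSeries.X * narGF0 * narGF1 :=
  NarayanaProofAux.main
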